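/- Let δ > 0, ρ > 0, and let x₁, r₁, ε₁, λ₁ : [0,∞) → ℝ be differentiable and F : [0,∞) → ℝ be continuous with F(t) ≥ δ for all t. Suppose that at every time t with x₁(t) ∈ (0, 1] and r₁(t) ∈ (0, ρ], the equations x₁' = −(1/2)ε₁x₁F, r₁' = (1/2)r₁ε₁F, ε₁' = −ε₁²F, λ₁' = −(1/2)λ₁ε₁F hold, and assume x₁(0) ∈ (0, 1], r₁(0) ∈ (0, ρ), ε₁(0) > 0. Then there exists a smallest time t̂ > 0 with r₁(t̂) = ρ; on [0, t̂] the function r₁ is strictly increasing and x₁ is strictly decreasing with x₁(t) = r₁(0)x₁(0)/r₁(t) > 0; and at the exit time x₁(t̂) = r₁(0)x₁(0)/ρ, ε₁(t̂) = r₁(0)²ε₁(0)/ρ² and λ₁(t̂) = r₁(0)λ₁(0)/ρ. (This is the statement that trajectories starting in the blown-up critical manifold to the right of the zero set of F leave the chart domain through {r₁ = ρ} in finite time, with exit values determined by the conserved quantities x = r₁x₁, ε = r₁²ε₁, λ = r₁λ₁.) -/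

import Mathlib

open Set Filter Topology

private lemma constOnAux {f : ℝ → ℝ} {T : ℝ}
    (hcont : ContinuousOn f (Set.Icc 0 T))
    (hder : ∀ x ∈ Set.Ico (0:ℝ) T, HasDerivAt f 0 x) :
    ∀ x ∈ Set.Icc (0:ℝ) T, f x = f 0 :=
  fun x hx => constant_of_has_deriv_right_zero hcont
    (fun y hy => (hder y hy).hasDerivWithinAt) x hx

private lemma consAux
    (ρ : ℝ) (x₁ r₁ ε₁ l₁ F : ℝ → ℝ)
    (hdiff : ∀ t : ℝ, 0 ≤ t → DifferentiableAt ℝ x₁ t ∧ DifferentiableAt ℝ r₁ t ∧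
      DifferentiableAt ℝ ε₁ t ∧ DifferentiableAt ℝ l₁ t)
    (hx : ∀ t : ℝ, 0 ≤ t → x₁ t ∈ Set.Ioc (0 : ℝ) 1 → r₁ t ∈ Set.Ioc (0 : ℝ) ρ →
      HasDerivAt x₁ (-(1 / 2) * ε₁ t * x₁ t * F t) t)
    (hr : ∀ t : ℝ, 0 ≤ t → x₁ t ∈ Set.Ioc (0 : ℝ) 1 → r₁ t ∈ Set.Ioc (0 : ℝ) ρ →
      HasDerivAt r₁ ((1 / 2) * r₁ t * ε₁ t * F t) t)
    (he : ∀ t : ℝ, 0 ≤ t → x₁ t ∈ Set.Ioc (0 : ℝ) 1 → r₁ t ∈ Set.Ioc (0 : ℝ) ρ →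
      HasDerivAt ε₁ (-(ε₁ t) ^ 2 * F t) t)
    (hl : ∀ t : ℝ, 0 ≤ t → x₁ t ∈ Set.Ioc (0 : ℝ) 1 → r₁ t ∈ Set.Ioc (0 : ℝ) ρ →
      HasDerivAt l₁ (-(1 / 2) * l₁ t * ε₁ t * F t) t)
    (T : ℝ)
    (hgood : ∀ s ∈ Set.Icc (0:ℝ) T, x₁ s ∈ Set.Ioc (0:ℝ) 1 ∧ r₁ s ∈ Set.Ioc (0:ℝ) ρ) :
    ∀ s ∈ Set.Icc (0:ℝ) T, r₁ s * x₁ s = r₁ 0 * x₁ 0 ∧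
      r₁ s ^ 2 * ε₁ s = r₁ 0 ^ 2 * ε₁ 0 ∧ r₁ s * l₁ s = r₁ 0 * l₁ 0 := by
  have contOn : ∀ g : ℝ → ℝ, (∀ t : ℝ, 0 ≤ t → DifferentiableAt ℝ g t) →
      ContinuousOn g (Set.Icc 0 T) :=
    fun g hg t ht => (hg t ht.1).continuousAt.continuousWithinAt
  have cx := contOn x₁ (fun t ht => (hdiff t ht).1)
  have cr := contOn r₁ (fun t ht => (hdiff t ht).2.1)
  have ce := contOn ε₁ (fun t ht => (hdiff t ht).2.2.1)
  have cl := contOn l₁ (fun t ht => (hdiff t ht).2.2.2)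
  have h1 := constOnAux (f := fun t => r₁ t * x₁ t) (cr.mul cx) (fun y hy => by
    have hP := hgood y ⟨hy.1, hy.2.le⟩
    have := (hr y hy.1 hP.1 hP.2).mul (hx y hy.1 hP.1 hP.2)
    exact this.congr_deriv (by ring))
  have h2 := constOnAux (f := fun t => r₁ t ^ 2 * ε₁ t) ((cr.pow 2).mul ce) (fun y hy => by
    have hP := hgood y ⟨hy.1, hy.2.le⟩
    have := ((hr y hy.1 hP.1 hP.2).pow 2).mul (he y hy.1 hP.1 hP.2)
    exact this.congr_deriv (by simp only [Pi.pow_apply]; ring))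
  have h3 := constOnAux (f := fun t => r₁ t * l₁ t) (cr.mul cl) (fun y hy => by
    have hP := hgood y ⟨hy.1, hy.2.le⟩
    have := (hr y hy.1 hP.1 hP.2).mul (hl y hy.1 hP.1 hP.2)
    exact this.congr_deriv (by ring))
  exact fun s hs => ⟨h1 s hs, h2 s hs, h3 s hs⟩


private lemma monoAux
    (δ ρ : ℝ) (hδ : 0 < δ) (hρ : 0 < ρ) (x₁ r₁ ε₁ : ℝ → ℝ)
    (hdx : ∀ t : ℝ, 0 ≤ t → DifferentiableAt ℝ x₁ t)
    (hdr : ∀ t : ℝ, 0 ≤ t → DifferentiableAt ℝ r₁ t)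
    (F : ℝ → ℝ) (hFpos : ∀ t : ℝ, 0 ≤ t → δ ≤ F t)
    (hx : ∀ t : ℝ, 0 ≤ t → x₁ t ∈ Set.Ioc (0 : ℝ) 1 → r₁ t ∈ Set.Ioc (0 : ℝ) ρ →
      HasDerivAt x₁ (-(1 / 2) * ε₁ t * x₁ t * F t) t)
    (hr : ∀ t : ℝ, 0 ≤ t → x₁ t ∈ Set.Ioc (0 : ℝ) 1 → r₁ t ∈ Set.Ioc (0 : ℝ) ρ →
      HasDerivAt r₁ ((1 / 2) * r₁ t * ε₁ t * F t) t)
    (hr0p : 0 < r₁ 0) (he0 : 0 < ε₁ 0)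
    (T : ℝ) (hT : 0 ≤ T)
    (hgood : ∀ s ∈ Set.Icc (0:ℝ) T, x₁ s ∈ Set.Ioc (0:ℝ) 1 ∧ r₁ s ∈ Set.Ioc (0:ℝ) ρ)
    (hcons : ∀ s ∈ Set.Icc (0:ℝ) T, r₁ s ^ 2 * ε₁ s = r₁ 0 ^ 2 * ε₁ 0) :
    StrictMonoOn r₁ (Set.Icc 0 T) ∧ StrictAntiOn x₁ (Set.Icc 0 T) ∧
      r₁ 0 + (r₁ 0 ^ 2 * ε₁ 0 * δ / (2 * ρ)) * T ≤ r₁ T := by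
  set K : ℝ := r₁ 0 ^ 2 * ε₁ 0 with hKdef
  have hK : 0 < K := by positivity
  set c : ℝ := K * δ / (2 * ρ) with hcdef
  have hc : 0 < c := by positivity
  have hεpos : ∀ s ∈ Set.Icc (0:ℝ) T, 0 < ε₁ s ∧ ε₁ s = K / r₁ s ^ 2 := by
    intro s hs
    have hrs := (hgood s hs).2.1
    have h2 := hcons s hs
    have hrne : r₁ s ^ 2 ≠ 0 := by positivity
    have heq : ε₁ s = K / r₁ s ^ 2 := by
      field_simp
      linarith [h2]
    refine ⟨?_, heq⟩
    rw [heq]; positivity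
  have hcr : ContinuousOn r₁ (Set.Icc 0 T) :=
    fun t ht => (hdr t ht.1).continuousAt.continuousWithinAt
  have hcx : ContinuousOn x₁ (Set.Icc 0 T) :=
    fun t ht => (hdx t ht.1).continuousAt.continuousWithinAt
  have hmem : ∀ y ∈ interior (Set.Icc (0:ℝ) T), y ∈ Set.Icc (0:ℝ) T := fun y hy =>
    interior_subset hy
  have hmono : StrictMonoOn r₁ (Set.Icc 0 T) := by
    apply strictMonoOn_of_deriv_pos (convex_Icc 0 T) hcr
    intro y hy
    have hyI := hmem y hy
    have hP := hgood y hyI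
    have hd := hr y hyI.1 hP.1 hP.2
    rw [hd.deriv]
    have h1 := (hεpos y hyI).1
    have hF : 0 < F y := lt_of_lt_of_le hδ (hFpos y hyI.1)
    have h2 := hP.2.1
    positivity
  have hanti : StrictAntiOn x₁ (Set.Icc 0 T) := by
    apply strictAntiOn_of_deriv_neg (convex_Icc 0 T) hcx
    intro y hy
    have hyI := hmem y hy
    have hP := hgood y hyI
    have hd := hx y hyI.1 hP.1 hP.2
    rw [hd.deriv]
    have h1 := (hεpos y hyI).1
    have hF : 0 < F y := lt_of_lt_of_le hδ (hFpos y hyI.1)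
    have h2 := hP.1.1
    nlinarith [mul_pos (mul_pos h1 h2) hF]
  refine ⟨hmono, hanti, ?_⟩
  have hgrow : MonotoneOn (fun t => r₁ t - c * t) (Set.Icc 0 T) := by
    apply monotoneOn_of_deriv_nonneg (convex_Icc 0 T)
    · exact hcr.sub ((continuous_const.mul continuous_id).continuousOn)
    · intro y hy
      rw [interior_Icc] at hy
      exact ((hdr y hy.1.le).sub ((differentiable_id.const_mul c) y)).differentiableWithinAt
    · intro y hy
      rw [interior_Icc] at hy
      have hyI : y ∈ Set.Icc (0:ℝ) T := ⟨hy.1.le, hy.2.le⟩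
      have hP := hgood y hyI
      have hd : HasDerivAt (fun t => r₁ t - c * t) ((1 / 2) * r₁ y * ε₁ y * F y - c) y := by
        exact (hr y hyI.1 hP.1 hP.2).sub ((hasDerivAt_id y).const_mul c |>.congr_deriv (by ring))
      rw [hd.deriv]
      have heq := (hεpos y hyI).2
      have hrp := hP.2.1
      have hrρ := hP.2.2
      have hF := hFpos y hyI.1
      have key : (1 / 2) * r₁ y * ε₁ y * F y = K * F y / (2 * r₁ y) := by
        rw [heq]; field_simp
      rw [key, hcdef]
      have h1 : K * δ ≤ K * F y := by nlinarith
      have h2 : K * δ / (2 * ρ) ≤ K * F y / (2 * r₁ y) :=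
        div_le_div₀ (by nlinarith) h1 (by linarith) (by linarith)
      linarith
  have h0 : (0:ℝ) ∈ Set.Icc (0:ℝ) T := ⟨le_refl _, hT⟩
  have hTT : T ∈ Set.Icc (0:ℝ) T := ⟨hT, le_refl _⟩
  have := hgrow h0 hTT hT
  simp only [mul_zero, sub_zero] at this
  linarith

/-- In chart `K₁`, a trajectory of the desingularized canard
system starting in the blown-up critical manifold to the right of the zero set
of `F` (i.e. with `F ≥ δ > 0` along the solution, `x₁ 0 ∈ (0,1]`,
`r₁ 0 ∈ (0,ρ)`, `ε₁ 0 > 0`) leaves the chart domain through `{r₁ = ρ}` at a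
first time `t̂ > 0`; on `[0, t̂]` the function `r₁` is strictly increasing and
`x₁` is strictly decreasing with `x₁ t = r₁ 0 · x₁ 0 / r₁ t > 0`, and the exit
values are determined by the conserved quantities:
`x₁ t̂ = r₁ 0 · x₁ 0 / ρ`, `ε₁ t̂ = (r₁ 0)² ε₁ 0 / ρ²`, `λ₁ t̂ = r₁ 0 · λ₁ 0 / ρ`. -/
theorem chartK1_right_region_exits_chart
    (δ ρ : ℝ) (hδ : 0 < δ) (hρ : 0 < ρ) (x₁ r₁ ε₁ l₁ F : ℝ → ℝ)
    (hdiff : ∀ t : ℝ, 0 ≤ t → DifferentiableAt ℝ x₁ t ∧ DifferentiableAt ℝ r₁ t ∧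
      DifferentiableAt ℝ ε₁ t ∧ DifferentiableAt ℝ l₁ t)
    (hFcont : Continuous F) (hFpos : ∀ t : ℝ, 0 ≤ t → δ ≤ F t)
    (hx : ∀ t : ℝ, 0 ≤ t → x₁ t ∈ Set.Ioc (0 : ℝ) 1 → r₁ t ∈ Set.Ioc (0 : ℝ) ρ →
      HasDerivAt x₁ (-(1 / 2) * ε₁ t * x₁ t * F t) t)
    (hr : ∀ t : ℝ, 0 ≤ t → x₁ t ∈ Set.Ioc (0 : ℝ) 1 → r₁ t ∈ Set.Ioc (0 : ℝ) ρ →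
      HasDerivAt r₁ ((1 / 2) * r₁ t * ε₁ t * F t) t)
    (he : ∀ t : ℝ, 0 ≤ t → x₁ t ∈ Set.Ioc (0 : ℝ) 1 → r₁ t ∈ Set.Ioc (0 : ℝ) ρ →
      HasDerivAt ε₁ (-(ε₁ t) ^ 2 * F t) t)
    (hl : ∀ t : ℝ, 0 ≤ t → x₁ t ∈ Set.Ioc (0 : ℝ) 1 → r₁ t ∈ Set.Ioc (0 : ℝ) ρ →
      HasDerivAt l₁ (-(1 / 2) * l₁ t * ε₁ t * F t) t)
    (hx0 : x₁ 0 ∈ Set.Ioc (0 : ℝ) 1) (hr0 : r₁ 0 ∈ Set.Ioo (0 : ℝ) ρ)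
    (he0 : 0 < ε₁ 0) :
    ∃ t' : ℝ, 0 < t' ∧ r₁ t' = ρ ∧ (∀ s ∈ Set.Ico (0 : ℝ) t', r₁ s ≠ ρ) ∧
      StrictMonoOn r₁ (Set.Icc 0 t') ∧
      StrictAntiOn x₁ (Set.Icc 0 t') ∧
      (∀ s ∈ Set.Icc (0 : ℝ) t', x₁ s = r₁ 0 * x₁ 0 / r₁ s ∧ 0 < x₁ s) ∧
      x₁ t' = r₁ 0 * x₁ 0 / ρ ∧
      ε₁ t' = (r₁ 0) ^ 2 * ε₁ 0 / ρ ^ 2 ∧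
      l₁ t' = r₁ 0 * l₁ 0 / ρ := by
  obtain ⟨hx0p, hx0le⟩ := hx0
  obtain ⟨hr0p, hr0ρ⟩ := hr0
  have hx0' : x₁ 0 ∈ Set.Ioc (0:ℝ) 1 := ⟨hx0p, hx0le⟩
  have hr0' : r₁ 0 ∈ Set.Ioc (0:ℝ) ρ := ⟨hr0p, hr0ρ.le⟩
  set K : ℝ := r₁ 0 ^ 2 * ε₁ 0 with hKdef
  have hK : 0 < K := by positivity
  set c : ℝ := K * δ / (2 * ρ) with hcdef
  have hc : 0 < c := by positivity
  set S : Set ℝ := {t | 0 ≤ t ∧ ∀ s ∈ Set.Icc (0:ℝ) t,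
      x₁ s ∈ Set.Ioc (0:ℝ) 1 ∧ r₁ s ∈ Set.Ioc (0:ℝ) ρ} with hSdef
  -- basic consequences of membership in S
  have hconsS : ∀ T ∈ S, ∀ s ∈ Set.Icc (0:ℝ) T, r₁ s * x₁ s = r₁ 0 * x₁ 0 ∧
      r₁ s ^ 2 * ε₁ s = r₁ 0 ^ 2 * ε₁ 0 ∧ r₁ s * l₁ s = r₁ 0 * l₁ 0 :=
    fun T hT => consAux ρ x₁ r₁ ε₁ l₁ F hdiff hx hr he hl T hT.2
  have hmonoS : ∀ T ∈ S, StrictMonoOn r₁ (Set.Icc 0 T) ∧ StrictAntiOn x₁ (Set.Icc 0 T) ∧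
      r₁ 0 + c * T ≤ r₁ T :=
    fun T hT => monoAux δ ρ hδ hρ x₁ r₁ ε₁ (fun t ht => (hdiff t ht).1)
      (fun t ht => (hdiff t ht).2.1) F hFpos hx hr hr0p he0 T hT.1 hT.2
      (fun s hs => (hconsS T hT s hs).2.1)
  have h0S : (0:ℝ) ∈ S := by
    refine ⟨le_refl _, fun s hs => ?_⟩
    have : s = 0 := le_antisymm hs.2 hs.1
    rw [this]
    exact ⟨hx0', hr0'⟩
  have hSne : S.Nonempty := ⟨0, h0S⟩
  have hSbdd : BddAbove S := by
    refine ⟨(ρ - r₁ 0) / c, fun T hT => ?_⟩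
    have h1 := (hmonoS T hT).2.2
    have h2 : r₁ T ≤ ρ := ((hT.2 T ⟨hT.1, le_refl _⟩).2).2
    rw [le_div_iff₀ hc]
    nlinarith
  -- a small positive time belongs to S
  have hexistsη : ∃ η > 0, η ∈ S := by
    have hF0 : 0 < F 0 := lt_of_lt_of_le hδ (hFpos 0 le_rfl)
    have hd : HasDerivAt x₁ (-(1 / 2) * ε₁ 0 * x₁ 0 * F 0) 0 := hx 0 le_rfl hx0' hr0'
    have hdneg : -(1 / 2) * ε₁ 0 * x₁ 0 * F 0 < 0 := by
      nlinarith [mul_pos (mul_pos he0 hx0p) hF0]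
    have hslope := hasDerivAt_iff_tendsto_slope.1 hd
    have ev1 : ∀ᶠ t in 𝓝[≠] (0:ℝ), slope x₁ 0 t < 0 :=
      hslope.eventually_lt_const hdneg
    have ev1' : ∀ᶠ t in 𝓝[>] (0:ℝ), slope x₁ 0 t < 0 :=
      ev1.filter_mono (nhdsWithin_mono 0 (fun x hx => ne_of_gt hx))
    have hcx : ContinuousAt x₁ 0 := (hdiff 0 le_rfl).1.continuousAt
    have hcr : ContinuousAt r₁ 0 := (hdiff 0 le_rfl).2.1.continuousAt
    have ev2 : ∀ᶠ t in 𝓝 (0:ℝ), 0 < x₁ t := hcx.eventually_mem (Ioi_mem_nhds hx0p)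
    have ev3 : ∀ᶠ t in 𝓝 (0:ℝ), r₁ t ∈ Set.Ioo 0 ρ :=
      hcr.eventually_mem (Ioo_mem_nhds hr0p hr0ρ)
    have evall : ∀ᶠ t in 𝓝[>] (0:ℝ),
        x₁ t ∈ Set.Ioc (0:ℝ) 1 ∧ r₁ t ∈ Set.Ioc (0:ℝ) ρ := by
      filter_upwards [ev1', ev2.filter_mono nhdsWithin_le_nhds,
        ev3.filter_mono nhdsWithin_le_nhds, self_mem_nhdsWithin] with t h1 h2 h3 h4
      have ht : (0:ℝ) < t := h4
      have hsl : (x₁ t - x₁ 0) / (t - 0) < 0 := by rwa [slope_def_field] at h1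
      have hlt : x₁ t < x₁ 0 := by
        rw [sub_zero] at hsl
        rcases div_neg_iff.1 hsl with ⟨ha, hb⟩ | ⟨ha, hb⟩
        · linarith
        · linarith
      exact ⟨⟨h2, le_trans hlt.le hx0le⟩, ⟨h3.1, h3.2.le⟩⟩
    obtain ⟨u, hu, hsub⟩ := mem_nhdsGT_iff_exists_Ioc_subset.1 evall
    refine ⟨u, hu, hu.le, fun s hs => ?_⟩
    rcases eq_or_lt_of_le hs.1 with h | h
    · rw [← h]; exact ⟨hx0', hr0'⟩
    · exact hsub ⟨h, hs.2⟩
  obtain ⟨η, hηpos, hηS⟩ := hexistsη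
  set T₀ : ℝ := sSup S with hT₀def
  have hT₀pos : 0 < T₀ := lt_of_lt_of_le hηpos (le_csSup hSbdd hηS)
  have hbelow : ∀ s : ℝ, 0 ≤ s → s < T₀ → s ∈ S := by
    intro s hs0 hsT
    obtain ⟨u, huS, hsu⟩ := exists_lt_of_lt_csSup hSne hsT
    exact ⟨hs0, fun v hv => huS.2 v ⟨hv.1, le_trans hv.2 hsu.le⟩⟩
  -- facts on [0, T₀)
  have hfacts : ∀ s ∈ Set.Ioo (0:ℝ) T₀,
      r₁ s ≤ ρ ∧ r₁ 0 + c * s ≤ r₁ s ∧ r₁ s * x₁ s = r₁ 0 * x₁ 0 := by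
    intro s hs
    have hsS := hbelow s hs.1.le hs.2
    have h1 := (hsS.2 s ⟨hs.1.le, le_refl _⟩).2.2
    have h2 := (hmonoS s hsS).2.2
    have h3 := (hconsS s hsS s ⟨hs.1.le, le_refl _⟩).1
    exact ⟨h1, h2, h3⟩
  have hLne : (𝓝[<] T₀).NeBot := nhdsLT_neBot T₀
  have hIoo : Set.Ioo (0:ℝ) T₀ ∈ 𝓝[<] T₀ := Ioo_mem_nhdsLT_of_mem ⟨hT₀pos, le_refl _⟩
  have hcrT : ContinuousAt r₁ T₀ := (hdiff T₀ hT₀pos.le).2.1.continuousAt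
  have hcxT : ContinuousAt x₁ T₀ := (hdiff T₀ hT₀pos.le).1.continuousAt
  have hrlim : Tendsto r₁ (𝓝[<] T₀) (𝓝 (r₁ T₀)) := hcrT.continuousWithinAt.tendsto
  have hxlim : Tendsto x₁ (𝓝[<] T₀) (𝓝 (x₁ T₀)) := hcxT.continuousWithinAt.tendsto
  have hrT₀le : r₁ T₀ ≤ ρ :=
    le_of_tendsto hrlim (eventually_of_mem hIoo (fun s hs => (hfacts s hs).1))
  have hrT₀ge : r₁ 0 + c * T₀ ≤ r₁ T₀ := by
    have hlim2 : Tendsto (fun s => r₁ s - c * s) (𝓝[<] T₀) (𝓝 (r₁ T₀ - c * T₀)) :=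
      hrlim.sub (((continuous_const.mul continuous_id).tendsto T₀).mono_left nhdsWithin_le_nhds)
    have hge : r₁ 0 ≤ r₁ T₀ - c * T₀ := ge_of_tendsto hlim2 (eventually_of_mem hIoo
      (fun s hs => by have := (hfacts s hs).2.1; linarith))
    linarith
  have hrT₀pos : 0 < r₁ T₀ := by nlinarith
  have hrT₀gt : r₁ 0 < r₁ T₀ := by nlinarith
  have hprodT₀ : r₁ T₀ * x₁ T₀ = r₁ 0 * x₁ 0 := by
    have hlim3 : Tendsto (fun s => r₁ s * x₁ s) (𝓝[<] T₀) (𝓝 (r₁ T₀ * x₁ T₀)) :=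
      hrlim.mul hxlim
    have hlim4 : Tendsto (fun s => r₁ s * x₁ s) (𝓝[<] T₀) (𝓝 (r₁ 0 * x₁ 0)) :=
      tendsto_const_nhds.congr' (eventually_of_mem hIoo
        (fun s hs => ((hfacts s hs).2.2).symm))
    exact tendsto_nhds_unique hlim3 hlim4
  have hxT₀ : x₁ T₀ = r₁ 0 * x₁ 0 / r₁ T₀ := by
    field_simp
    linarith [hprodT₀]
  have hxT₀pos : 0 < x₁ T₀ := by rw [hxT₀]; positivity
  have hxT₀lt : x₁ T₀ < x₁ 0 := by
    rw [hxT₀, div_lt_iff₀ hrT₀pos]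
    nlinarith
  have hT₀S : T₀ ∈ S := by
    refine ⟨hT₀pos.le, fun s hs => ?_⟩
    rcases lt_or_eq_of_le hs.2 with h | h
    · exact (hbelow s hs.1 h).2 s ⟨hs.1, le_refl _⟩
    · rw [h]
      exact ⟨⟨hxT₀pos, le_trans hxT₀lt.le hx0le⟩, ⟨hrT₀pos, hrT₀le⟩⟩
  -- r₁ T₀ = ρ
  have hrT₀ρ : r₁ T₀ = ρ := by
    by_contra hne
    have hlt : r₁ T₀ < ρ := lt_of_le_of_ne hrT₀le hne
    have hxT₀le1 : x₁ T₀ < 1 := lt_of_lt_of_le hxT₀lt hx0le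
    have evx : ∀ᶠ t in 𝓝 T₀, x₁ t ∈ Set.Ioo (0:ℝ) 1 :=
      hcxT.eventually_mem (Ioo_mem_nhds hxT₀pos hxT₀le1)
    have evr : ∀ᶠ t in 𝓝 T₀, r₁ t ∈ Set.Ioo (0:ℝ) ρ :=
      hcrT.eventually_mem (Ioo_mem_nhds hrT₀pos hlt)
    obtain ⟨ε, hεpos, hball⟩ := Metric.eventually_nhds_iff.1 (evx.and evr)
    have hmemS : T₀ + ε / 2 ∈ S := by
      refine ⟨by linarith [hT₀pos], fun s hs => ?_⟩
      rcases le_or_gt s T₀ with h | h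
      · exact hT₀S.2 s ⟨hs.1, h⟩
      · have hdist : dist s T₀ < ε := by
          rw [Real.dist_eq, abs_of_pos (by linarith)]
          have h2 := hs.2
          linarith
        obtain ⟨h1, h2⟩ := hball hdist
        exact ⟨⟨h1.1, h1.2.le⟩, ⟨h2.1, h2.2.le⟩⟩
    have hle := le_csSup hSbdd hmemS
    rw [← hT₀def] at hle
    linarith
  -- assemble everything
  have hconsT₀ := hconsS T₀ hT₀S
  have hmonoT₀ := hmonoS T₀ hT₀S
  refine ⟨T₀, hT₀pos, hrT₀ρ, ?_, hmonoT₀.1, hmonoT₀.2.1, ?_, ?_, ?_, ?_⟩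
  · intro s hs
    have := hmonoT₀.1 ⟨hs.1, hs.2.le⟩ ⟨hT₀pos.le, le_refl _⟩ hs.2
    rw [hrT₀ρ] at this
    exact ne_of_lt this
  · intro s hs
    have hcons := (hconsT₀ s hs).1
    have hrsp : 0 < r₁ s := ((hT₀S.2 s hs).2).1
    constructor
    · field_simp
      linarith [hcons]
    · have : x₁ s = r₁ 0 * x₁ 0 / r₁ s := by field_simp; linarith [hcons]
      rw [this]; positivity
  · rw [hxT₀, hrT₀ρ]
  · have h2 := (hconsT₀ T₀ ⟨hT₀pos.le, le_refl _⟩).2.1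
    rw [hrT₀ρ] at h2
    field_simp
    linarith [h2]
  · have h3 := (hconsT₀ T₀ ⟨hT₀pos.le, le_refl _⟩).2.2
    rw [hrT₀ρ] at h3
    field_simp
    linarith [h3]
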